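/- Let X₁ = (2A−1)·2^{k} ± 1 with A, k natural numbers and k ≥ 2. Then for every natural number r ≥ 2, T_{2^r+1}(X₁) ≡ X₁ + 2^{k+r+1} (mod 2^{k+r+2}), and likewise T_{2^r−1}(X₁) ≡ X₁ + 2^{k+r+1} (mod 2^{k+r+2}). -/

import Mathlib

open Polynomial Polynomial.Chebyshev

private lemma evalT_double (x n : ℤ) :
    (T ℤ (2 * n)).eval x = 2 * ((T ℤ n).eval x) ^ 2 - 1 := by
  have h := congrArg (Polynomial.eval x) (T_mul_T ℤ n n)
  simp only [show n + n = 2 * n by ring, sub_self, T_zero, eval_mul, eval_add, eval_one,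
    eval_ofNat] at h
  linear_combination -h

private lemma evalT_succ (x n : ℤ) :
    (T ℤ (2 * n + 1)).eval x = 2 * ((T ℤ (n + 1)).eval x) * ((T ℤ n).eval x) - x := by
  have h := congrArg (Polynomial.eval x) (T_mul_T ℤ (n + 1) n)
  simp only [show n + 1 + n = 2 * n + 1 by ring, show n + 1 - n = 1 by ring, T_one,
    eval_mul, eval_add, eval_X, eval_ofNat] at h
  linear_combination -h

private lemma evalT_pred (x n : ℤ) :
    (T ℤ (2 * n - 1)).eval x = 2 * ((T ℤ n).eval x) * ((T ℤ (n - 1)).eval x) - x := by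
  have h := congrArg (Polynomial.eval x) (T_mul_T ℤ n (n - 1))
  simp only [show n + (n - 1) = 2 * n - 1 by ring, show n - (n - 1) = 1 by ring, T_one,
    eval_mul, eval_add, eval_X, eval_ofNat] at h
  linear_combination -h

private lemma key (c ε : ℤ) (k : ℕ) (hk : 2 ≤ k) (hc : Odd c) (hε : ε = 1 ∨ ε = -1) :
    ∀ r : ℕ, 2 ≤ r → ∃ v w u : ℤ, Odd v ∧ Odd w ∧ Odd u ∧
      (T ℤ ((2 : ℤ) ^ r)).eval (c * 2 ^ k + ε) = 1 + v * 2 ^ (k + 2 * r) ∧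
      (T ℤ ((2 : ℤ) ^ r + 1)).eval (c * 2 ^ k + ε) = (c * 2 ^ k + ε) + w * 2 ^ (k + r + 1) ∧
      (T ℤ ((2 : ℤ) ^ r - 1)).eval (c * 2 ^ k + ε) = (c * 2 ^ k + ε) + u * 2 ^ (k + r + 1) := by
  have hεodd : Odd ε := by rcases hε with rfl | rfl <;> decide
  set x : ℤ := c * 2 ^ k + ε with hxdef
  have h2k : (2 : ℤ) ^ k = 2 ^ (k - 1) * 2 := by rw [← pow_succ]; congr 1; omega
  have hxodd : Odd x := by
    refine Even.add_odd ⟨c * 2 ^ (k - 1), ?_⟩ hεodd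
    rw [h2k]; ring
  have ev2 : ∀ m : ℕ, 1 ≤ m → Even ((2 : ℤ) ^ m) := by
    intro m hm
    obtain ⟨j, rfl⟩ := Nat.exists_eq_add_of_le hm
    exact ⟨2 ^ j, by rw [pow_add]; ring⟩
  intro r hr
  induction r, hr using Nat.le_induction with
  | base =>
    have hT2 : (T ℤ 2).eval x = 2 * x ^ 2 - 1 := by simp [T_two]
    have hT3 : (T ℤ 3).eval x = 2 * (2 * x ^ 2 - 1) * x - x := by
      have h := evalT_succ x 1
      norm_num [T_one] at h
      rw [h, hT2]
    have hT4 : (T ℤ 4).eval x = 2 * (2 * x ^ 2 - 1) ^ 2 - 1 := by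
      have h := evalT_double x 2
      norm_num at h
      rw [h, hT2]
    have hT5 : (T ℤ 5).eval x =
        2 * (2 * (2 * x ^ 2 - 1) * x - x) * (2 * x ^ 2 - 1) - x := by
      have h := evalT_succ x 2
      norm_num at h
      rw [h, hT3, hT2]
    set m : ℤ := 2 ^ (k - 1) with hm
    have hmeven : Even m := ev2 _ (by omega)
    set v₁ : ℤ := c * ε + c ^ 2 * m with hv₁
    have hv₁odd : Odd v₁ := (hc.mul hεodd).add_even (hmeven.mul_left _)
    have e1 : (2 : ℤ) ^ (k + 1) = m * 4 := by
      rw [show k + 1 = (k - 1) + 2 by omega, pow_add, hm]; norm_num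
    have e3 : (2 : ℤ) ^ (k + 2 + 1) = m * 16 := by
      rw [show k + 2 + 1 = (k - 1) + 4 by omega, pow_add, hm]; norm_num
    have e4 : (2 : ℤ) ^ (k + 2 * 2) = m * 32 := by
      rw [show k + 2 * 2 = (k - 1) + 5 by omega, pow_add, hm]; norm_num
    refine ⟨v₁ + v₁ ^ 2 * 2 ^ (k + 1), 3 * v₁ * x + v₁ ^ 2 * x * 2 ^ (k + 2 + 1), v₁ * x,
      hv₁odd.add_even ((ev2 _ (by omega)).mul_left _),
      ((by decide : Odd (3 : ℤ)).mul hv₁odd |>.mul hxodd).add_even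
        ((ev2 _ (by omega)).mul_left _),
      hv₁odd.mul hxodd, ?_, ?_, ?_⟩
    · rw [show ((2 : ℤ) ^ 2) = 4 by norm_num, hT4, hxdef, hv₁, e1, e4, h2k, hm]
      rcases hε with rfl | rfl <;> ring
    · rw [show ((2 : ℤ) ^ 2 + 1) = 5 by norm_num, hT5, hxdef, hv₁, e3, h2k, hm]
      rcases hε with rfl | rfl <;> ring
    · rw [show ((2 : ℤ) ^ 2 - 1) = 3 by norm_num, hT3, hxdef, hv₁, e3, h2k, hm]
      rcases hε with rfl | rfl <;> ring
  | succ n hn ih =>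
    obtain ⟨v, w, u, hv, hw, hu, hP, hS, hD⟩ := ih
    have i1 : (T ℤ ((2 : ℤ) ^ (n + 1))).eval x
        = 2 * ((T ℤ ((2 : ℤ) ^ n)).eval x) ^ 2 - 1 := by
      rw [show ((2 : ℤ) ^ (n + 1)) = 2 * 2 ^ n by ring]
      exact evalT_double x _
    have i2 : (T ℤ ((2 : ℤ) ^ (n + 1) + 1)).eval x
        = 2 * ((T ℤ ((2 : ℤ) ^ n + 1)).eval x) * ((T ℤ ((2 : ℤ) ^ n)).eval x) - x := by
      rw [show ((2 : ℤ) ^ (n + 1)) = 2 * 2 ^ n by ring]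
      exact evalT_succ x _
    have i3 : (T ℤ ((2 : ℤ) ^ (n + 1) - 1)).eval x
        = 2 * ((T ℤ ((2 : ℤ) ^ n)).eval x) * ((T ℤ ((2 : ℤ) ^ n - 1)).eval x) - x := by
      rw [show ((2 : ℤ) ^ (n + 1)) = 2 * 2 ^ n by ring]
      exact evalT_pred x _
    have ha : (2 : ℤ) ^ (k + 2 * n) = 2 ^ (k + 2 * n - 1) * 2 := by
      rw [← pow_succ]; congr 1; omega
    have ha' : (2 : ℤ) ^ (k + 2 * (n + 1)) = 2 ^ (k + 2 * n - 1) * 8 := by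
      rw [show k + 2 * (n + 1) = (k + 2 * n - 1) + 3 by omega, pow_add]; norm_num
    have hb : (2 : ℤ) ^ (k + 2 * n) = 2 ^ (k + n + 1) * 2 ^ (n - 1) := by
      rw [← pow_add]; congr 1; omega
    have hb' : (2 : ℤ) ^ (k + (n + 1) + 1) = 2 ^ (k + n + 1) * 2 := by
      rw [show k + (n + 1) + 1 = (k + n + 1) + 1 by omega, pow_succ]
    refine ⟨v + v ^ 2 * 2 ^ (k + 2 * n - 1),
      w + (v * x * 2 ^ (n - 1) + v * w * 2 ^ (k + 2 * n)),
      u + (v * x * 2 ^ (n - 1) + v * u * 2 ^ (k + 2 * n)),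
      hv.add_even ((ev2 _ (by omega)).mul_left _),
      hw.add_even (((ev2 _ (by omega)).mul_left _).add ((ev2 _ (by omega)).mul_left _)),
      hu.add_even (((ev2 _ (by omega)).mul_left _).add ((ev2 _ (by omega)).mul_left _)),
      ?_, ?_, ?_⟩
    · rw [i1, hP, ha, ha']; ring
    · rw [i2, hS, hP, hb, hb']; ring
    · rw [i3, hD, hP, hb, hb']; ring

/-- Let `X₁ = (2A−1)·2^k ± 1` with `A ≥ 1`, `k ≥ 2`. Then for every `r ≥ 2`,
`T_{2^r±1}(X₁) ≡ X₁ + 2^{k+r+1} (mod 2^{k+r+2})` for both choices of sign in the degree. -/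
theorem chebyshev_two_pow_pm_one_at_X1 (A k : ℕ) (hA : 1 ≤ A) (hk : 2 ≤ k)
    (ε : ℤ) (hε : ε = 1 ∨ ε = -1) (r : ℕ) (hr : 2 ≤ r) :
    ((Polynomial.Chebyshev.T ℤ ((2 : ℤ) ^ r + 1)).eval ((2 * (A : ℤ) - 1) * 2 ^ k + ε) ≡
        ((2 * (A : ℤ) - 1) * 2 ^ k + ε) + 2 ^ (k + r + 1) [ZMOD 2 ^ (k + r + 2)]) ∧
    ((Polynomial.Chebyshev.T ℤ ((2 : ℤ) ^ r - 1)).eval ((2 * (A : ℤ) - 1) * 2 ^ k + ε) ≡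
        ((2 * (A : ℤ) - 1) * 2 ^ k + ε) + 2 ^ (k + r + 1) [ZMOD 2 ^ (k + r + 2)]) := by
  have hc : Odd (2 * (A : ℤ) - 1) := ⟨(A : ℤ) - 1, by ring⟩
  obtain ⟨v, w, u, hv, hw, hu, hP, hS, hD⟩ := key (2 * (A : ℤ) - 1) ε k hk hc hε r hr
  have hpow : (2 : ℤ) ^ (k + r + 2) = 2 ^ (k + r + 1) * 2 := by
    rw [← pow_succ]
  constructor
  · obtain ⟨t, ht⟩ := hw
    rw [hS]
    refine Int.modEq_iff_dvd.mpr ⟨-t, ?_⟩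
    rw [ht, hpow]; ring
  · obtain ⟨t, ht⟩ := hu
    rw [hD]
    refine Int.modEq_iff_dvd.mpr ⟨-t, ?_⟩
    rw [ht, hpow]; ring
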